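/- Fix a real α ≥ 1. For every z in the upper half-plane H, the principal root z^{1/α} lies in H, fixes the rays from the origin in the sense that Arg(z^{1/α}) = Arg(z)/α, and satisfies the argument-lessening property Arg(z^{1/α} − 1) ≤ Arg(z − 1); that is, the root map r(z) = z^{1/α} belongs to the class P of Pick Argument Lessening functions. -/

import Mathlib

/- The upper half-plane H = {z : ℂ | Im z > 0}. -/
def UHP : Set ℂ := {z : ℂ | 0 < z.im}

/- The half-axis [1, ∞) viewed inside ℂ. -/
def posRay : Set ℂ := {z : ℂ | z.im = 0 ∧ 1 ≤ z.re}

/-- The class P of Pick Argument Lessening functions. -/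
structure IsPal (φ : ℂ → ℂ) : Prop where
  holo : DifferentiableOn ℂ φ UHP
  mapsUHP : ∀ z ∈ UHP, 0 < (φ z).im
  cont : ContinuousOn φ (UHP ∪ posRay)
  realOnRay : ∀ z ∈ posRay, (φ z).im = 0
  fix_one : φ 1 = 1

open Real

lemma sin_weight (a x : ℝ) (ha : 0 ≤ a) (ha1 : a ≤ 1) (hx : 0 ≤ x) (hxπ : x ≤ π) :
    a * Real.sin x ≤ Real.sin (a * x) := by
  have hab : a + (1 - a) = 1 := by ring
  have h := strictConcaveOn_sin_Icc.concaveOn.2 (x := x) (y := 0)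
    ⟨hx, hxπ⟩ ⟨le_refl 0, pi_pos.le⟩ ha (by linarith : (0:ℝ) ≤ 1 - a) hab
  simpa using h

lemma key_ineq (α r φ : ℝ) (hα : 1 ≤ α) (hr : 0 < r) (hφ : 0 < φ) (hπ : α * φ < π) :
    r ^ (α - 1) * Real.sin (α * φ) ≤ r ^ α * Real.sin ((α - 1) * φ) + Real.sin φ := by
  have hα0 : 0 < α := lt_of_lt_of_le one_pos hα
  set s := Real.sin (α * φ) with hs_def
  have hs : 0 < s := Real.sin_pos_of_pos_of_lt_pi (by positivity) hπ
  have hw₁ : 0 ≤ (α - 1) / α := div_nonneg (by linarith) hα0.le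
  have hw₂ : (0:ℝ) ≤ 1 / α := by positivity
  have hsum : (α - 1) / α + 1 / α = 1 := by field_simp; ring
  have hrα : (0:ℝ) ≤ r ^ α := (Real.rpow_pos_of_pos hr α).le
  have h1 : (α - 1) / α * s ≤ Real.sin ((α - 1) * φ) := by
    have := sin_weight ((α - 1)/α) (α * φ) hw₁ (by rw [div_le_one hα0]; linarith) (by positivity) hπ.le
    have hre : (α - 1)/α * (α * φ) = (α - 1) * φ := by field_simp
    rwa [hre] at this
  have h2 : 1 / α * s ≤ Real.sin φ := by
    have := sin_weight (1/α) (α * φ) hw₂ (by rw [div_le_one hα0]; linarith) (by positivity) hπ.le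
    have hre : 1/α * (α * φ) = φ := by field_simp
    rwa [hre] at this
  have hAG := Real.geom_mean_le_arith_mean2_weighted hw₁ hw₂
    (mul_nonneg hrα hs.le) hs.le hsum
  have e1 : (r ^ α) ^ ((α - 1)/α) = r ^ (α - 1) := by
    rw [← Real.rpow_mul hr.le]; congr 1; field_simp
  have e2 : s ^ ((α - 1)/α) * s ^ (1/α) = s := by
    rw [← Real.rpow_add hs, hsum, Real.rpow_one]
  have hL : (r ^ α * s) ^ ((α - 1)/α) * s ^ (1/α) = r ^ (α - 1) * s := by
    rw [Real.mul_rpow hrα hs.le, mul_assoc, e2, e1]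
  rw [hL] at hAG
  nlinarith [mul_le_mul_of_nonneg_left h1 hrα]

lemma root_aux (α : ℝ) (hα : 1 ≤ α) {z : ℂ} (hz : 0 < z.im) :
    0 < (z ^ (((1 / α : ℝ)) : ℂ)).im ∧
    Complex.arg (z ^ (((1 / α : ℝ)) : ℂ)) = Complex.arg z / α ∧
    Complex.arg (z ^ (((1 / α : ℝ)) : ℂ) - 1) ≤ Complex.arg (z - 1) := by
  have hα0 : 0 < α := lt_of_lt_of_le one_pos hα
  set c : ℝ := 1 / α with hc_def
  have hc : 0 < c := by positivity
  have hc1 : c ≤ 1 := by rw [hc_def, div_le_one hα0]; exact hα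
  have hz0 : z ≠ 0 := by intro h; rw [h] at hz; simp at hz
  have hargz_pos : 0 < z.arg := by
    rcases lt_or_eq_of_le (Complex.arg_nonneg_iff.2 hz.le) with h | h
    · exact h
    · exact absurd (Complex.arg_eq_zero_iff.1 h.symm).2 (ne_of_gt hz)
  have hargz_lt : z.arg < π := Complex.arg_lt_pi_iff.2 (Or.inr (ne_of_gt hz))
  set w := z ^ ((c : ℝ) : ℂ) with hw_def
  have hwexp : w = Complex.exp (Complex.log z * (c : ℂ)) :=
    Complex.cpow_def_of_ne_zero hz0 _
  have hw0 : w ≠ 0 := by rw [hwexp]; exact Complex.exp_ne_zero _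
  have him : (Complex.log z * ((c : ℝ) : ℂ)).im = z.arg * c := by
    simp [Complex.mul_im, Complex.log_im]
  have hlogw : Complex.log w = Complex.log z * (c : ℂ) := by
    rw [hwexp, Complex.log_exp]
    · rw [him]; nlinarith [pi_pos]
    · rw [him]
      calc z.arg * c ≤ z.arg * 1 := by nlinarith
        _ ≤ π := by linarith
  have hargw : w.arg = z.arg * c := by rw [← Complex.log_im, hlogw, him]
  have hargw_pos : 0 < w.arg := by rw [hargw]; positivity
  have hθφ : z.arg = α * w.arg := by rw [hargw, hc_def]; field_simp
  have hargw_lt : w.arg < π := by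
    calc w.arg = z.arg * c := hargw
      _ ≤ z.arg * 1 := by nlinarith
      _ < π := by linarith
  have hwim : 0 < w.im := by
    rw [← Complex.norm_mul_sin_arg w]
    exact mul_pos (norm_pos_iff.mpr hw0) (Real.sin_pos_of_pos_of_lt_pi hargw_pos hargw_lt)
  refine ⟨hwim, by rw [hargw, hc_def]; ring, ?_⟩
  -- part 3
  set r := ‖w‖ with hr_def
  set φ := w.arg with hφ_def
  have hrpos : 0 < r := norm_pos_iff.mpr hw0
  have hR : ‖z‖ = r ^ α := by
    rw [hr_def, hw_def, Complex.norm_cpow_real, ← Real.rpow_mul (norm_nonneg z)]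
    rw [hc_def]
    field_simp
    rw [Real.rpow_one]
  have hπφ : α * φ < π := by rw [← hθφ]; exact hargz_lt
  have key := key_ineq α r φ hα hrpos hargw_pos hπφ
  have e : r ^ (α - 1) * r = r ^ α := by
    rw [← Real.rpow_add_one (ne_of_gt hrpos) (α - 1), sub_add_cancel]
  have key' : r ^ α * Real.sin (α * φ) ≤
      r ^ α * r * Real.sin ((α - 1) * φ) + r * Real.sin φ := by
    have := mul_le_mul_of_nonneg_right key hrpos.le
    calc r ^ α * Real.sin (α * φ) = r ^ (α - 1) * Real.sin (α * φ) * r := by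
          rw [mul_right_comm, e]
      _ ≤ (r ^ α * Real.sin ((α - 1) * φ) + Real.sin φ) * r := this
      _ = r ^ α * r * Real.sin ((α - 1) * φ) + r * Real.sin φ := by ring
  set a := z - 1 with ha_def
  set b := w - 1 with hb_def
  have hzre : z.re = r ^ α * Real.cos z.arg := by
    rw [← Complex.norm_mul_cos_arg z, hR]
  have hzim2 : z.im = r ^ α * Real.sin z.arg := by
    rw [← Complex.norm_mul_sin_arg z, hR]
  have hwre : w.re = r * Real.cos φ := by rw [← Complex.norm_mul_cos_arg w]
  have hwim2 : w.im = r * Real.sin φ := by rw [← Complex.norm_mul_sin_arg w]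
  have hsinsub : Real.sin z.arg * Real.cos φ - Real.cos z.arg * Real.sin φ
      = Real.sin ((α - 1) * φ) := by
    rw [← Real.sin_sub, hθφ]; congr 1; ring
  have hcross : 0 ≤ a.im * b.re - a.re * b.im := by
    have expand : a.im * b.re - a.re * b.im =
        r ^ α * r * (Real.sin z.arg * Real.cos φ - Real.cos z.arg * Real.sin φ)
          - r ^ α * Real.sin z.arg + r * Real.sin φ := by
      simp only [ha_def, hb_def, Complex.sub_re, Complex.sub_im, Complex.one_re,
        Complex.one_im, hzre, hzim2, hwre, hwim2]
      ring
    rw [expand, hsinsub, hθφ] at *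
    linarith
  have haim : 0 < a.im := by simp [ha_def, Complex.sub_im]; exact hz
  have hbim : 0 < b.im := by simp [hb_def, Complex.sub_im]; exact hwim
  have ha0 : a ≠ 0 := by intro h; rw [h] at haim; simp at haim
  have hb0 : b ≠ 0 := by intro h; rw [h] at hbim; simp at hbim
  have harga_pos : 0 < a.arg := by
    rcases lt_or_eq_of_le (Complex.arg_nonneg_iff.2 haim.le) with h | h
    · exact h
    · exact absurd (Complex.arg_eq_zero_iff.1 h.symm).2 (ne_of_gt haim)
  have hsin : 0 ≤ Real.sin (a.arg - b.arg) := by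
    rw [Real.sin_sub, Complex.sin_arg, Complex.cos_arg hb0,
      Complex.cos_arg ha0, Complex.sin_arg]
    have : a.im / ‖a‖ * (b.re / ‖b‖)
        - a.re / ‖a‖ * (b.im / ‖b‖)
        = (a.im * b.re - a.re * b.im) / (‖a‖ * ‖b‖) := by
      ring
    rw [this]
    exact div_nonneg hcross (by positivity)
  by_contra hlt
  push_neg at hlt
  have h1 : a.arg - b.arg < 0 := by linarith
  have h2 : -π < a.arg - b.arg := by
    have := Complex.arg_le_pi b
    linarith
  exact absurd hsin (not_le.2 (Real.sin_neg_of_neg_of_neg_pi_lt h1 h2))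

/-- for α ≥ 1, the principal root map r(z) = z^{1/α} maps the
upper half-plane into itself, takes rays from the origin onto rays
(Arg(z^{1/α}) = Arg(z)/α), satisfies Arg(z^{1/α} − 1) ≤ Arg(z − 1), and
belongs to the class P. -/
theorem root_map_is_pal (α : ℝ) (hα : 1 ≤ α) :
    (∀ z ∈ UHP,
      0 < (z ^ (((1 / α : ℝ)) : ℂ)).im ∧
      Complex.arg (z ^ (((1 / α : ℝ)) : ℂ)) = Complex.arg z / α ∧
      Complex.arg (z ^ (((1 / α : ℝ)) : ℂ) - 1) ≤ Complex.arg (z - 1)) ∧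
    IsPal (fun z : ℂ => z ^ (((1 / α : ℝ)) : ℂ)) := by
  constructor
  · exact fun z hz => root_aux α hα hz
  · constructor
    · intro z hz
      refine DifferentiableAt.differentiableWithinAt ?_
      exact (differentiableAt_id.cpow (differentiableAt_const _)
        (Complex.mem_slitPlane_iff.2 (Or.inr (ne_of_gt hz))))
    · exact fun z hz => (root_aux α hα hz).1
    · intro z hz
      refine ContinuousAt.continuousWithinAt ?_
      refine continuousAt_cpow_const (Complex.mem_slitPlane_iff.2 ?_)
      rcases hz with hz | hz
      · exact Or.inr (ne_of_gt hz)
      · exact Or.inl (lt_of_lt_of_le one_pos hz.2)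
    · intro z hz
      have hzre : (0:ℝ) ≤ z.re := le_trans zero_le_one hz.2
      have hzeq : z = ((z.re : ℝ) : ℂ) := by
        apply Complex.ext <;> simp [hz.1]
      rw [hzeq, ← Complex.ofReal_cpow hzre]
      simp
    · simp
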